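/- Among all ordered trees r-isomorphic to a given rooted tree R, the one with the lexicographically largest weight sequence is canonically ordered, and its weight sequence equals the canonical weight sequence cws(R). -/

import Mathlib

inductive OTree : Type
  | node : List OTree → OTree

namespace OTree

def size : OTree → ℕ
  | .node cs => (cs.attach.map (fun c => size c.1)).sum + 1
decreasing_by simp only [OTree.node.sizeOf_spec]; have := List.sizeOf_lt_of_mem c.2; omega

def ws : OTree → List ℕ
  | .node cs => size (.node cs) :: (cs.attach.map (fun c => ws c.1)).flatten
decreasing_by simp only [OTree.node.sizeOf_spec]; have := List.sizeOf_lt_of_mem c.2; omega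

def preorder : OTree → List OTree
  | .node cs => .node cs :: (cs.attach.map (fun c => preorder c.1)).flatten
decreasing_by simp only [OTree.node.sizeOf_spec]; have := List.sizeOf_lt_of_mem c.2; omega

lemma size_pos (R : OTree) : 0 < R.size := by
  cases R with | node cs => simp only [OTree.size]; omega

end OTree

inductive RIso : OTree → OTree → Prop
  | node {cs cs' : List OTree} (l : List OTree) (hp : l.Perm cs')
      (hlen : cs.length = l.length)
      (h : ∀ (i : ℕ) (h1 : i < cs.length) (h2 : i < l.length), RIso cs[i] l[i]) :
      RIso (.node cs) (.node cs')

inductive Canonical : OTree → Prop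
  | node {cs : List OTree}
      (hchain : List.Chain' (fun u v => OTree.ws v ≤ OTree.ws u) cs)
      (h : ∀ c ∈ cs, Canonical c) : Canonical (.node cs)

def Centroidal {V : Type} [Fintype V] (G : SimpleGraph V) (u : V) : Prop :=
  ∀ v : ↥{x : V | x ≠ u},
    2 * Nat.card {w : ↥{x : V | x ≠ u} | (G.induce {x : V | x ≠ u}).Reachable v w}
      ≤ Fintype.card V

def IsParent (w : List ℕ) (i j : ℕ) : Prop :=
  i < j ∧ j < i + w.getD i 0 ∧ ∀ k, i < k → k < j → ¬ (j < k + w.getD k 0)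

def graphOf (R : OTree) : SimpleGraph (Fin R.size) :=
  SimpleGraph.fromRel (fun i j => IsParent R.ws i.1 j.1)

def rootIdx (R : OTree) : Fin R.size := ⟨0, R.size_pos⟩

def B (n : ℕ) : Set (List ℕ) := {s | ∃ R : OTree, Canonical R ∧ R.size = n ∧ R.ws = s}

def Succeq (s t : List ℕ) : Prop := t ≤ s ∨ s <+: t

def A (q n : ℕ) : Set (List ℕ × List ℕ) :=
  {p | p.1 ∈ B q ∧ p.2 ∈ B (n - q) ∧ Succeq p.1 p.2.tail}

def FwsUni {V : Type} [Fintype V] (G : SimpleGraph V) (s : List ℕ) : Prop :=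
  ∃ R : OTree, Canonical R ∧ R.ws = s ∧
    ∃ f : graphOf R ≃g G, Centroidal G (f (rootIdx R))

def FwsBi {V : Type} [Fintype V] (G : SimpleGraph V) (s : List ℕ) : Prop :=
  ∃ u v, u ≠ v ∧ G.Adj u v ∧ Centroidal G u ∧ Centroidal G v ∧
  ∃ A B : OTree, Canonical A ∧ Canonical B ∧ B.ws ≤ A.ws ∧ s = A.ws ++ B.ws ∧
  ∃ (fA : graphOf A ≃g (G.deleteEdges {s(u,v)}).induce
        {x | (G.deleteEdges {s(u,v)}).Reachable u x})
    (fB : graphOf B ≃g (G.deleteEdges {s(u,v)}).induce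
        {x | (G.deleteEdges {s(u,v)}).Reachable v x}),
    (fA (rootIdx A)).1 = u ∧ (fB (rootIdx B)).1 = v

/-! ### Auxiliary lemmas -/

section Aux

open OTree List

lemma otree_ind (motive : OTree → Prop)
    (h : ∀ cs : List OTree, (∀ c ∈ cs, motive c) → motive (OTree.node cs)) :
    ∀ t, motive t
  | .node cs => h cs fun c hc => otree_ind motive h c
decreasing_by simp only [OTree.node.sizeOf_spec]; have := List.sizeOf_lt_of_mem hc; omega

lemma size_node (cs : List OTree) :
    OTree.size (.node cs) = (cs.map OTree.size).sum + 1 := by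
  rw [OTree.size]; congr 2; simp

lemma ws_node (cs : List OTree) :
    OTree.ws (.node cs) = OTree.size (.node cs) :: (cs.map OTree.ws).flatten := by
  rw [OTree.ws]; congr 2; simp

lemma ws_length : ∀ t : OTree, t.ws.length = t.size := by
  refine otree_ind _ (fun cs ih => ?_)
  rw [ws_node, size_node]
  simp only [List.length_cons, List.length_flatten, List.map_map]
  have h : cs.map (List.length ∘ OTree.ws) = cs.map OTree.size :=
    List.map_congr_left fun c hc => by simp [ih c hc]
  rw [h]

lemma ws_good (t : OTree) : t.ws.head? = some t.ws.length := by
  rw [ws_length]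
  cases t with | node cs => rw [ws_node]; rfl

/-! #### Lexicographic order lemmas -/

lemma lt_lex {a b : List ℕ} : a < b ↔ List.Lex (· < ·) a b := Iff.rfl

lemma lex_append_left {s t : List ℕ} (x : List ℕ) (h : s < t) : x ++ s < x ++ t :=
  lt_lex.mpr (List.Lex.append_left _ (lt_lex.mp h) x)

lemma le_append_left {s t : List ℕ} (x : List ℕ) (h : s ≤ t) : x ++ s ≤ x ++ t := by
  rcases lt_or_eq_of_le h with h | rfl
  · exact le_of_lt (lex_append_left x h)
  · exact le_rfl

lemma lex_append_of_length_eq : ∀ {a b : List ℕ}, List.Lex (· < ·) a b → a.length = b.length →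
    ∀ s t : List ℕ, List.Lex (· < ·) (a ++ s) (b ++ t)
  | _, _, .nil, hl => by simp at hl
  | _, _, .cons h, hl => fun s t =>
      .cons (lex_append_of_length_eq h (by simpa using hl) s t)
  | _, _, .rel h, _ => fun _ _ => .rel h

lemma lex_key {a b : List ℕ} (h : a < b) (ha : a.head? = some a.length)
    (hb : b.head? = some b.length) (s t : List ℕ) : a ++ s < b ++ t := by
  match a, b with
  | [], _ => simp at ha
  | _ :: _, [] => exact absurd (lt_lex.mp h) (by simp)
  | x :: a', y :: b' =>
    rw [lt_lex]
    simp only [List.head?_cons, List.length_cons, Option.some.injEq] at ha hb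
    rcases lt_trichotomy x y with hxy | rfl | hxy
    · exact List.Lex.rel hxy
    · exact lex_append_of_length_eq (lt_lex.mp h) (by simp; omega) s t
    · exfalso
      cases lt_lex.mp h with
      | cons h => omega
      | rel h => omega

/-! #### RIso lemmas -/

lemma forall₂_to_rel : ∀ {as bs : List OTree}, List.Forall₂ RIso as bs →
    Multiset.Rel RIso ↑as ↑bs
  | _, _, .nil => Multiset.Rel.zero
  | _, _, .cons h hs => by
      rw [← Multiset.cons_coe, ← Multiset.cons_coe]
      exact Multiset.Rel.cons h (forall₂_to_rel hs)

lemma rel_to_exists : ∀ (as : List OTree) (t : Multiset OTree), Multiset.Rel RIso ↑as t →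
    ∃ bs : List OTree, t = ↑bs ∧ List.Forall₂ RIso as bs
  | [], t, h => by
      rw [Multiset.coe_nil, Multiset.rel_zero_left] at h
      exact ⟨[], by simp [h], .nil⟩
  | a :: as, t, h => by
      rw [← Multiset.cons_coe] at h
      rcases Multiset.rel_cons_left.mp h with ⟨b, t', hab, h', rfl⟩
      rcases rel_to_exists as t' h' with ⟨bs, rfl, hf⟩
      exact ⟨b :: bs, (Multiset.cons_coe _ _).symm, .cons hab hf⟩

lemma riso_node_iff {cs cs' : List OTree} :
    RIso (.node cs) (.node cs') ↔ Multiset.Rel RIso ↑cs ↑cs' := by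
  constructor
  · rintro ⟨l, hp, hlen, h⟩
    have hf : List.Forall₂ RIso cs l :=
      List.forall₂_iff_get.mpr ⟨hlen, fun i h1 h2 => by simpa using h i h1 h2⟩
    have h2 := forall₂_to_rel hf
    rwa [Multiset.coe_eq_coe.mpr hp] at h2
  · intro h
    rcases rel_to_exists cs _ h with ⟨l, hl, hf⟩
    refine RIso.node l (Multiset.coe_eq_coe.mp hl.symm) hf.length_eq ?_
    intro i h1 h2
    have h3 := (List.forall₂_iff_get.mp hf).2 i h1 h2
    simpa using h3

lemma riso_refl : ∀ t : OTree, RIso t t := by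
  refine otree_ind _ fun cs ih => ?_
  exact riso_node_iff.mpr (Multiset.rel_refl_of_refl_on fun x hx => ih x (by simpa using hx))

lemma riso_symm : ∀ {t u : OTree}, RIso t u → RIso u t := by
  have key : ∀ t : OTree, ∀ u, RIso t u → RIso u t := by
    refine otree_ind _ fun cs ih => ?_
    intro u h
    cases u with | node cs' =>
    rw [riso_node_iff] at h ⊢
    rw [← Multiset.rel_flip]
    exact h.mono fun a ha b _ hab => ih a (by simpa using ha) b hab
  exact fun {t u} => key t u

lemma rel_comp {s t u : Multiset OTree} (h1 : Multiset.Rel RIso s t)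
    (h2 : Multiset.Rel RIso t u) :
    Multiset.Rel (fun a c => ∃ b, RIso a b ∧ RIso b c) s u := by
  induction h1 generalizing u with
  | zero =>
    rw [Multiset.rel_zero_left] at h2
    subst h2
    exact .zero
  | @cons a b as bs hab h ih =>
    rcases Multiset.rel_cons_left.mp h2 with ⟨c, u', hbc, h2', rfl⟩
    exact .cons ⟨b, hab, hbc⟩ (ih h2')

lemma riso_trans : ∀ {t u v : OTree}, RIso t u → RIso u v → RIso t v := by
  have key : ∀ t : OTree, ∀ u v, RIso t u → RIso u v → RIso t v := by
    refine otree_ind _ fun cs ih => ?_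
    intro u v h1 h2
    cases u with | node ds =>
    cases v with | node es =>
    rw [riso_node_iff] at h1 h2 ⊢
    exact (rel_comp h1 h2).mono
      fun a ha c _ ⟨b, hab, hbc⟩ => ih a (by simpa using ha) b c hab hbc
  exact fun {t u v} => key t u v

lemma riso_size : ∀ {t u : OTree}, RIso t u → t.size = u.size := by
  have key : ∀ t : OTree, ∀ u, RIso t u → t.size = u.size := by
    refine otree_ind _ fun cs ih => ?_
    intro u h
    cases u with | node ds =>
    rw [riso_node_iff] at h
    have h2 : Multiset.Rel (· = ·) (Multiset.map OTree.size ↑cs) (Multiset.map OTree.size ↑ds) :=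
      Multiset.rel_map.mpr (h.mono fun a ha b _ hab => ih a (by simpa using ha) b hab)
    have h3 := Multiset.rel_eq.mp h2
    rw [size_node, size_node]
    have h4 : (cs.map OTree.size).sum = (ds.map OTree.size).sum := by
      have h5 := congrArg Multiset.sum h3
      simpa [Multiset.map_coe, Multiset.sum_coe] using h5
    omega
  exact fun {t u} => key t u

lemma riso_of_perm {cs cs' : List OTree} (h : cs.Perm cs') : RIso (.node cs) (.node cs') :=
  RIso.node cs h rfl fun _ _ _ => riso_refl _

lemma riso_set {cs : List OTree} {i : ℕ} (hi : i < cs.length) {c' : OTree}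
    (h : RIso cs[i] c') : RIso (.node cs) (.node (cs.set i c')) := by
  refine RIso.node (cs.set i c') (List.Perm.refl _) (by simp) ?_
  intro j h1 h2
  rw [List.getElem_set]
  split
  · next hj => subst hj; exact h
  · exact riso_refl _

lemma set_getElem_self {α : Type*} {l : List α} {i : ℕ} (h : i < l.length) :
    l.set i l[i] = l := by
  apply List.ext_getElem (by simp)
  intro j h1 h2
  rw [List.getElem_set]
  split <;> simp_all

lemma flatten_set_decomp {L : List (List ℕ)} {i : ℕ} (h : i < L.length) (b : List ℕ) :
    (L.set i b).flatten = (L.take i).flatten ++ (b ++ (L.drop (i+1)).flatten) := by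
  rw [List.set_eq_take_append_cons_drop, if_pos h]
  simp [List.flatten_append]

/-! #### Main lemmas -/

lemma canonical_of_max : ∀ M : OTree, (∀ M', RIso M M' → M'.ws ≤ M.ws) → Canonical M := by
  refine otree_ind _ fun cs ih hmax => ?_
  have hkey : ∀ (i : ℕ) (hi : i < cs.length) (c' : OTree), RIso cs[i] c' → c'.ws ≤ cs[i].ws := by
    intro i hi c' hc'
    by_contra hlt
    rw [not_le] at hlt
    have hR := riso_set hi hc'
    have hle := hmax _ hR
    have hsz : OTree.size (.node (cs.set i c')) = OTree.size (.node cs) := by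
      rw [size_node, size_node]
      have h1 : (cs.set i c').map OTree.size = (cs.map OTree.size).set i (OTree.size c') :=
        List.map_set
      have h2 : OTree.size c' = (cs.map OTree.size)[i]'(by simpa using hi) := by
        rw [List.getElem_map]
        exact (riso_size hc').symm
      rw [h1, h2, _root_.set_getElem_self]
    have hi' : i < (cs.map OTree.ws).length := by simpa using hi
    have e1 : (cs.map OTree.ws).flatten =
        ((cs.map OTree.ws).take i).flatten ++
          (OTree.ws cs[i] ++ ((cs.map OTree.ws).drop (i+1)).flatten) := by
      conv_lhs => rw [← _root_.set_getElem_self hi']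
      rw [flatten_set_decomp hi']
      rw [List.getElem_map]
    have e2 : ((cs.set i c').map OTree.ws).flatten =
        ((cs.map OTree.ws).take i).flatten ++
          (OTree.ws c' ++ ((cs.map OTree.ws).drop (i+1)).flatten) := by
      rw [List.map_set, flatten_set_decomp hi']
    have hflat : (cs.map OTree.ws).flatten < ((cs.set i c').map OTree.ws).flatten := by
      rw [e1, e2]
      exact lex_append_left _ (lex_key hlt (ws_good _) (ws_good _) _ _)
    have hlt2 : OTree.ws (.node cs) < OTree.ws (.node (cs.set i c')) := by
      rw [ws_node, ws_node, hsz]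
      exact lt_lex.mpr (List.Lex.cons (lt_lex.mp hflat))
    exact absurd hle (not_le_of_gt hlt2)
  have hchildren : ∀ c ∈ cs, Canonical c := by
    intro c hc
    rcases List.getElem_of_mem hc with ⟨i, hi, rfl⟩
    exact ih _ hc fun c' h => hkey i hi c' h
  have hchain : List.Chain' (fun u v => OTree.ws v ≤ OTree.ws u) cs := by
    refine List.isChain_iff_getElem.mpr ?_
    intro i hi
    show cs[i+1].ws ≤ cs[i].ws
    by_contra hlt
    rw [not_le] at hlt
    have hi1 : i + 1 < cs.length := by omega
    have hi0 : i < cs.length := by omega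
    have hdec : cs = cs.take i ++ cs[i] :: cs[i+1] :: cs.drop (i+2) := by
      conv_lhs => rw [← List.take_append_drop i cs]
      congr 1
      rw [List.drop_eq_getElem_cons hi0]
      congr 1
      exact List.drop_eq_getElem_cons hi1
    have hperm : cs.Perm (cs.take i ++ cs[i+1] :: cs[i] :: cs.drop (i+2)) := by
      conv_lhs => rw [hdec]
      exact List.Perm.append_left _ (List.Perm.swap _ _ _)
    have hR := riso_of_perm hperm
    have hle := hmax _ hR
    refine absurd hle (not_le_of_gt ?_)
    have hsz : OTree.size (.node (cs.take i ++ cs[i+1] :: cs[i] :: cs.drop (i+2))) =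
        OTree.size (.node cs) := by
      rw [size_node, size_node, (hperm.map OTree.size).sum_eq]
    rw [ws_node, ws_node, hsz]
    refine lt_lex.mpr (List.Lex.cons (lt_lex.mp ?_))
    conv_lhs => rw [hdec]
    simp only [List.map_append, List.map_cons, List.flatten_append, List.flatten_cons]
    have hsw := lex_key hlt (ws_good cs[i]) (ws_good cs[i+1])
      (cs[i+1].ws ++ ((cs.drop (i+2)).map OTree.ws).flatten)
      (cs[i].ws ++ ((cs.drop (i+2)).map OTree.ws).flatten)
    have hfin := lex_append_left (((cs.take i).map OTree.ws).flatten) hsw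
    simpa [List.append_assoc] using hfin
  exact Canonical.node hchain hchildren

lemma ws_eq_of_canonical : ∀ C : OTree, Canonical C → ∀ C' : OTree, Canonical C' →
    RIso C C' → C.ws = C'.ws := by
  refine otree_ind _ fun cs ih hC C' hC' hR => ?_
  cases C' with | node cs' =>
  have hsz := riso_size hR
  cases hC with | node hchain hcan =>
  cases hC' with | node hchain' hcan' =>
  cases hR with | node l hp hlen h =>
  have hmapeq : cs.map OTree.ws = l.map OTree.ws := by
    apply List.ext_getElem (by simpa using hlen)
    intro j h1 h2
    simp only [List.getElem_map]
    have hj1 : j < cs.length := by simpa using h1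
    have hj2 : j < l.length := by simpa using h2
    exact ih cs[j] (cs.getElem_mem hj1) (hcan _ (cs.getElem_mem hj1)) l[j]
      (hcan' _ (hp.subset (l.getElem_mem hj2))) (h j hj1 hj2)
  have hperm : (cs.map OTree.ws).Perm (cs'.map OTree.ws) := hmapeq ▸ hp.map OTree.ws
  haveI : IsTrans OTree (fun u v => OTree.ws v ≤ OTree.ws u) :=
    ⟨fun _ _ _ h1 h2 => le_trans h2 h1⟩
  haveI : IsAntisymm (List ℕ) (fun s t => t ≤ s) := ⟨fun _ _ h1 h2 => le_antisymm h2 h1⟩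
  have hs1 : List.Pairwise (fun s t : List ℕ => t ≤ s) (cs.map OTree.ws) :=
    List.pairwise_map.mpr (List.isChain_iff_pairwise.mp hchain)
  have hs2 : List.Pairwise (fun s t : List ℕ => t ≤ s) (cs'.map OTree.ws) :=
    List.pairwise_map.mpr (List.isChain_iff_pairwise.mp hchain')
  have heq := List.Perm.eq_of_pairwise' hs1 hs2 hperm
  rw [ws_node, ws_node, hsz, heq]

end Aux

theorem stmt7 (R M : OTree) (hM : RIso R M)
    (hmax : ∀ R' : OTree, RIso R R' → R'.ws ≤ M.ws) :
    Canonical M ∧ ∀ C : OTree, Canonical C → RIso R C → C.ws = M.ws := by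
  have hmaxM : ∀ M', RIso M M' → M'.ws ≤ M.ws := fun M' h => hmax M' (riso_trans hM h)
  have hcanM := canonical_of_max M hmaxM
  exact ⟨hcanM, fun C hC hRC =>
    ws_eq_of_canonical C hC M hcanM (riso_trans (riso_symm hRC) hM)⟩
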